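/- Descartes' rule of signs (upper bound form): for a nonzero real polynomial f, the number of strictly positive real roots of f, counted with multiplicity, is at most the number of sign changes in the sequence of nonzero coefficients of f. -/

import Mathlib

open scoped Classical

/-- The number of sign changes in the sequence of nonzero coefficients of a real polynomial. -/
noncomputable def signChanges (p : Polynomial ℝ) : ℕ :=
  let l := ((List.range (p.natDegree + 1)).map p.coeff).filter (fun a => a ≠ 0)
  ((l.zip l.tail).filter (fun ab => ab.1 * ab.2 < 0)).length

namespace Descartes

noncomputable def chg : List ℝ → ℕ
  | a :: b :: t => (if a * b < 0 then 1 else 0) + chg (b :: t)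
  | _ => 0

noncomputable def vh (s : ℝ) : List ℝ → ℕ
  | [] => 0
  | b :: t => if b = 0 then vh s t else (if s * b < 0 then 1 else 0) + vh b t

noncomputable def v : List ℝ → ℕ
  | [] => 0
  | b :: t => if b = 0 then v t else vh b t

noncomputable def U (r : ℝ) : ℝ → List ℝ → List ℝ
  | prev, [] => [prev]
  | prev, b :: t => (prev - r * b) :: U r b t

@[simp] theorem vh_nil (s : ℝ) : vh s [] = 0 := rfl
theorem vh_cons (s b : ℝ) (t : List ℝ) :
    vh s (b :: t) = if b = 0 then vh s t else (if s * b < 0 then 1 else 0) + vh b t := rfl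
@[simp] theorem v_nil : v [] = 0 := rfl
theorem v_cons (b : ℝ) (t : List ℝ) : v (b :: t) = if b = 0 then v t else vh b t := rfl
@[simp] theorem U_nil (r prev : ℝ) : U r prev [] = [prev] := rfl
@[simp] theorem U_cons (r prev b : ℝ) (t : List ℝ) :
    U r prev (b :: t) = (prev - r * b) :: U r b t := rfl

theorem vh_cons_zero (s : ℝ) (t : List ℝ) : vh s (0 :: t) = vh s t := by
  rw [vh_cons, if_pos rfl]

theorem vh_cons_chg {s b : ℝ} (hb : b ≠ 0) (h : s * b < 0) (t : List ℝ) :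
    vh s (b :: t) = 1 + vh b t := by
  rw [vh_cons, if_neg hb, if_pos h]

theorem vh_cons_same {s b : ℝ} (hb : b ≠ 0) (h : ¬ s * b < 0) (t : List ℝ) :
    vh s (b :: t) = vh b t := by
  rw [vh_cons, if_neg hb, if_neg h, zero_add]

theorem vh_congr {s s' : ℝ} (h : 0 < s * s') : ∀ l, vh s l = vh s' l := by
  intro l
  induction l with
  | nil => rfl
  | cons b t ih =>
    by_cases hb : b = 0
    · simp [vh_cons, hb, ih]
    · have heq : (s * b < 0) ↔ (s' * b < 0) := by
        constructor <;> intro h1 <;> by_contra h2 <;> push_neg at h2 <;>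
          nlinarith [mul_pos h (mul_self_pos.mpr hb)]
      simp [vh_cons, hb, heq]

theorem KG (r : ℝ) (hr : 0 < r) : ∀ l : List ℝ,
    (∀ prev : ℝ, prev ≠ 0 → vh prev l + 1 ≤ vh (-prev) (U r prev l)) ∧
    (∀ s prev : ℝ, s ≠ 0 → (prev = 0 ∨ 0 < s * prev) → vh s (prev :: l) ≤ vh s (U r prev l)) := by
  intro l
  induction l with
  | nil =>
    constructor
    · intro prev hp
      have h1 : 0 < prev * prev := mul_self_pos.mpr hp
      rw [U_nil, vh_nil, vh_cons_chg hp (by nlinarith), vh_nil]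
    · intro s prev hs hsp
      rcases hsp with h | h
      · simp [h, vh_cons_zero]
      · rw [U_nil]
  | cons b t ih =>
    obtain ⟨K, G⟩ := ih
    have hb2 : ∀ b : ℝ, b ≠ 0 → 0 < b * b := fun b hb => mul_self_pos.mpr hb
    constructor
    · -- K for b :: t
      intro prev hp
      rw [U_cons]
      by_cases hb : b = 0
      · subst hb
        rw [mul_zero, sub_zero, vh_cons_zero, vh_cons_chg hp (by nlinarith [hb2 prev hp])]
        have h1 : vh prev (0 :: t) ≤ vh prev (U r 0 t) := G prev 0 hp (Or.inl rfl)
        rw [vh_cons_zero] at h1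
        omega
      · rcases lt_trichotomy (prev * b) 0 with hpb | hpb | hpb
        · -- opposite signs
          have hxp : 0 < (prev - r * b) * prev := by
            nlinarith [hb2 prev hp, mul_pos hr (neg_pos.mpr hpb)]
          have hx0 : prev - r * b ≠ 0 := by
            rintro h0; rw [h0, zero_mul] at hxp; exact lt_irrefl _ hxp
          have hxb : 0 < (prev - r * b) * (-b) := by
            nlinarith [neg_pos.mpr hpb, mul_pos hr (hb2 b hb)]
          rw [vh_cons_chg hb hpb, vh_cons_chg hx0 (by nlinarith), vh_congr hxb]
          have h2 := K b hb
          omega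
        · exact absurd (mul_eq_zero.mp hpb) (by simp [hp, hb])
        · -- same signs
          rw [vh_cons_same hb (by linarith)]
          rcases eq_or_ne (prev - r * b) 0 with hx0 | hx0
          · rw [hx0, vh_cons_zero, vh_congr (show 0 < (-prev) * (-b) by nlinarith)]
            have h2 := K b hb
            omega
          · rcases lt_trichotomy ((prev - r * b) * prev) 0 with hxs | hxs | hxs
            · -- x opposite prev, same as -b
              have hxb : 0 < (prev - r * b) * (-b) := by
                by_contra hc; push_neg at hc
                nlinarith [mul_neg_of_neg_of_pos hxs hpb, sq_nonneg prev]
              rw [vh_cons_same hx0 (by push_neg; nlinarith), vh_congr hxb]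
              have h2 := K b hb
              omega
            · exact absurd (mul_eq_zero.mp hxs) (by simp [hp, hx0])
            · -- x same sign as prev and b
              have hxb : 0 < (prev - r * b) * b := by
                by_contra hc; push_neg at hc
                nlinarith [mul_pos hxs hpb, sq_nonneg prev]
              rw [vh_cons_chg hx0 (by nlinarith), vh_congr hxb]
              have h2 : vh b (b :: t) ≤ vh b (U r b t) := G b b hb (Or.inr (hb2 b hb))
              rw [vh_cons_same hb (by push_neg; nlinarith [hb2 b hb])] at h2
              omega
    · -- G for b :: t
      intro s prev hs hsp
      rw [U_cons]
      rcases hsp with rfl | hsp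
      · -- prev = 0
        rw [zero_sub, vh_cons_zero]
        by_cases hb : b = 0
        · subst hb
          rw [mul_zero, neg_zero, vh_cons_zero, vh_cons_zero]
          have h1 := G s 0 hs (Or.inl rfl)
          rw [vh_cons_zero] at h1
          exact h1
        · have hrb : -(r * b) ≠ 0 := by
            simp only [ne_eq, neg_eq_zero, mul_eq_zero, not_or]
            exact ⟨by linarith, hb⟩
          have hxb : 0 < -(r * b) * (-b) := by nlinarith [mul_pos hr (hb2 b hb)]
          rcases lt_trichotomy (s * b) 0 with hsb | hsb | hsb
          · rw [vh_cons_chg hb hsb, vh_cons_same hrb (by push_neg; nlinarith), vh_congr hxb]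
            have h2 := K b hb
            omega
          · exact absurd (mul_eq_zero.mp hsb) (by simp [hs, hb])
          · rw [vh_cons_same hb (by linarith), vh_cons_chg hrb (by nlinarith), vh_congr hxb]
            have h2 := K b hb
            omega
      · -- 0 < s * prev
        have hp : prev ≠ 0 := by rintro rfl; rw [mul_zero] at hsp; exact lt_irrefl _ hsp
        rw [vh_cons_same hp (by linarith)]
        by_cases hb : b = 0
        · subst hb
          rw [mul_zero, sub_zero, vh_cons_zero, vh_cons_same hp (by linarith)]
          have h1 := G prev 0 hp (Or.inl rfl)
          rw [vh_cons_zero] at h1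
          exact h1
        · rcases lt_trichotomy (prev * b) 0 with hpb | hpb | hpb
          · -- prev, b opposite
            have hxp : 0 < (prev - r * b) * prev := by
              nlinarith [hb2 prev hp, mul_pos hr (neg_pos.mpr hpb)]
            have hx0 : prev - r * b ≠ 0 := by
              rintro h0; rw [h0, zero_mul] at hxp; exact lt_irrefl _ hxp
            have hxs : 0 < (prev - r * b) * s := by
              by_contra hc; push_neg at hc
              nlinarith [mul_pos hxp hsp, sq_nonneg prev]
            have hxb : 0 < (prev - r * b) * (-b) := by
              nlinarith [neg_pos.mpr hpb, mul_pos hr (hb2 b hb)]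
            rw [vh_cons_chg hb hpb, vh_cons_same hx0 (by push_neg; nlinarith), vh_congr hxb]
            have h2 := K b hb
            omega
          · exact absurd (mul_eq_zero.mp hpb) (by simp [hp, hb])
          · -- prev, b same sign (as s)
            have hsb : 0 < s * b := by
              by_contra hc; push_neg at hc
              nlinarith [mul_pos hsp hpb, sq_nonneg prev]
            rw [vh_cons_same hb (by linarith)]
            rcases eq_or_ne (prev - r * b) 0 with hx0 | hx0
            · rw [hx0, vh_cons_zero, vh_congr hsb]
              have h2 : vh b (b :: t) ≤ vh b (U r b t) := G b b hb (Or.inr (hb2 b hb))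
              rw [vh_cons_same hb (by push_neg; nlinarith [hb2 b hb])] at h2
              exact h2
            · rcases lt_trichotomy ((prev - r * b) * s) 0 with hxs | hxs | hxs
              · have hxb : 0 < (prev - r * b) * (-b) := by
                  by_contra hc; push_neg at hc
                  nlinarith [mul_neg_of_neg_of_pos hxs hsb, sq_nonneg s]
                rw [vh_cons_chg hx0 (by nlinarith), vh_congr hxb]
                have h2 := K b hb
                omega
              · exact absurd (mul_eq_zero.mp hxs) (by simp [hs, hx0])
              · have hxb : 0 < (prev - r * b) * b := by
                  by_contra hc; push_neg at hc
                  nlinarith [mul_pos hxs hsb, sq_nonneg s]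
                rw [vh_cons_same hx0 (by push_neg; nlinarith), vh_congr hxb]
                have h2 : vh b (b :: t) ≤ vh b (U r b t) := G b b hb (Or.inr (hb2 b hb))
                rw [vh_cons_same hb (by push_neg; nlinarith [hb2 b hb])] at h2
                exact h2



theorem v_U (r : ℝ) (hr : 0 < r) : ∀ l : List ℝ, (∃ x ∈ l, x ≠ 0) →
    v l + 1 ≤ v (U r 0 l) := by
  intro l
  induction l with
  | nil => rintro ⟨x, hx, _⟩; exact absurd hx List.not_mem_nil
  | cons b t ih =>
    rintro ⟨x, hx, hxne⟩
    rw [U_cons, zero_sub]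
    by_cases hb : b = 0
    · subst hb
      have hxt : x ∈ t := by
        rcases List.mem_cons.mp hx with rfl | h
        · exact absurd rfl hxne
        · exact h
      have h1 := ih ⟨x, hxt, hxne⟩
      rw [v_cons, if_pos rfl, mul_zero, neg_zero, v_cons, if_pos rfl]
      exact h1
    · have hrb : -(r * b) ≠ 0 := by
        simp only [ne_eq, neg_eq_zero, mul_eq_zero, not_or]
        exact ⟨by linarith, hb⟩
      rw [v_cons, if_neg hb, v_cons, if_neg hrb,
        vh_congr (show 0 < -(r*b) * (-b) by nlinarith [mul_self_pos.mpr hb])]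
      exact (KG r hr t).1 b hb

/-- coefficient list of a polynomial, low to high -/
noncomputable def coeffL (p : Polynomial ℝ) : List ℝ :=
  (List.range (p.natDegree + 1)).map p.coeff

theorem U_length (r : ℝ) : ∀ (l : List ℝ) (prev : ℝ), (U r prev l).length = l.length + 1 := by
  intro l
  induction l with
  | nil => intro prev; rfl
  | cons b t ih => intro prev; simp [U_cons, ih b]

theorem U_get (r : ℝ) : ∀ (l : List ℝ) (prev : ℝ) (i : ℕ) (hi : i < (U r prev l).length),
    (U r prev l)[i] = (prev :: l).getD i 0 - r * l.getD i 0 := by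
  intro l
  induction l with
  | nil =>
    intro prev i hi
    match i with
    | 0 => simp [U_nil]
    | (j+1) => simp [U_nil] at hi
  | cons b t ih =>
    intro prev i hi
    match i with
    | 0 => simp [U_cons]
    | (j+1) =>
      simp only [U_cons, List.getElem_cons_succ, List.getD_cons_succ]
      exact ih b j (by simpa [U_length] using hi)

theorem coeffL_mul (r : ℝ) (g : Polynomial ℝ) (hg : g ≠ 0) :
    coeffL ((Polynomial.X - Polynomial.C r) * g) = U r 0 (coeffL g) := by
  have hX : (Polynomial.X - Polynomial.C r) ≠ 0 := Polynomial.X_sub_C_ne_zero r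
  have hdeg : ((Polynomial.X - Polynomial.C r) * g).natDegree = g.natDegree + 1 := by
    rw [Polynomial.natDegree_mul hX hg, Polynomial.natDegree_X_sub_C]; omega
  apply List.ext_getElem
  · simp [coeffL, hdeg, U_length]
  · intro i hi hi2
    rw [U_get]
    have hi' : i < g.natDegree + 2 := by
      simp [coeffL, hdeg] at hi; omega
    have hcoeffL_getD : ∀ j : ℕ, (coeffL g).getD j 0 = g.coeff j := by
      intro j
      by_cases hj : j < g.natDegree + 1
      · rw [List.getD_eq_getElem _ _ (by simpa [coeffL] using hj)]
        simp [coeffL]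
      · rw [List.getD_eq_default _ _ (by simpa [coeffL] using hj)]
        exact (Polynomial.coeff_eq_zero_of_natDegree_lt (by omega)).symm
    have hL : (coeffL ((Polynomial.X - Polynomial.C r) * g))[i] =
        ((Polynomial.X - Polynomial.C r) * g).coeff i := by
      simp [coeffL]
    rw [hL]
    rw [sub_mul, Polynomial.coeff_sub, Polynomial.coeff_C_mul]
    match i with
    | 0 =>
      rw [List.getD_cons_zero, hcoeffL_getD 0, Polynomial.coeff_X_mul_zero]
    | (j+1) =>
      rw [Polynomial.coeff_X_mul, List.getD_cons_succ, hcoeffL_getD, hcoeffL_getD]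



open Polynomial



theorem chg_cons2 (a b : ℝ) (t : List ℝ) :
    chg (a :: b :: t) = (if a * b < 0 then 1 else 0) + chg (b :: t) := rfl

theorem chg_eq_zip : ∀ m : List ℝ,
    ((m.zip m.tail).filter (fun ab => ab.1 * ab.2 < 0)).length = chg m := by
  intro m
  match m with
  | [] => rfl
  | [a] => rfl
  | a :: b :: t =>
    have ih := chg_eq_zip (b :: t)
    simp only [List.tail_cons] at ih ⊢
    show ((a, b) :: ((b::t).zip t) |>.filter _).length = _
    rw [List.filter_cons, chg_cons2]
    by_cases h : a * b < 0
    · rw [if_pos (by simpa using h), List.length_cons, ih, if_pos h]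
      omega
    · rw [if_neg (by simpa using h), ih, if_neg h]
      omega

theorem vh_eq_chg (s : ℝ) (hs : s ≠ 0) : ∀ l : List ℝ,
    vh s l = chg (s :: l.filter (fun a => a ≠ 0)) := by
  intro l
  induction l generalizing s with
  | nil => simp [chg]
  | cons b t ih =>
    by_cases hb : b = 0
    · rw [vh_cons, if_pos hb, ih s hs, List.filter_cons, if_neg (by simp [hb])]
    · rw [vh_cons, if_neg hb, List.filter_cons_of_pos (by simpa using hb), ih b hb,
        chg_cons2]

theorem v_eq_chg : ∀ l : List ℝ, v l = chg (l.filter (fun a => a ≠ 0)) := by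
  intro l
  induction l with
  | nil => rfl
  | cons b t ih =>
    by_cases hb : b = 0
    · rw [v_cons, if_pos hb, ih, List.filter_cons, if_neg (by simp [hb])]
    · rw [v_cons, if_neg hb, List.filter_cons, if_pos (by simpa using hb), vh_eq_chg b hb]


theorem signChanges_eq_v (p : Polynomial ℝ) : signChanges p = v (coeffL p) := by
  rw [signChanges, v_eq_chg]
  exact chg_eq_zip _

theorem exists_ne_zero_coeffL (g : Polynomial ℝ) (hg : g ≠ 0) : ∃ x ∈ coeffL g, x ≠ 0 := by
  refine ⟨g.coeff g.natDegree, ?_, ?_⟩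
  · simp only [coeffL, List.mem_map]
    exact ⟨g.natDegree, by simp, rfl⟩
  · exact fun h => hg (Polynomial.leadingCoeff_eq_zero.mp h)

theorem descartes_aux : ∀ (n : ℕ) (p : Polynomial ℝ), p ≠ 0 →
    (p.roots.filter (fun x => 0 < x)).card = n → n ≤ v (coeffL p) := by
  intro n
  induction n with
  | zero => intro p _ _; exact Nat.zero_le _
  | succ m ih =>
    intro p hp hcard
    have hpos : 0 < (p.roots.filter (fun x => 0 < x)).card := by omega
    obtain ⟨r, hr⟩ := Multiset.card_pos_iff_exists_mem.mp hpos
    rw [Multiset.mem_filter] at hr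
    obtain ⟨hroot, hrpos⟩ := hr
    have hdvd : (X - C r) ∣ p := dvd_iff_isRoot.mpr (isRoot_of_mem_roots hroot)
    obtain ⟨g, hpg⟩ := hdvd
    have hg : g ≠ 0 := by rintro rfl; rw [mul_zero] at hpg; exact hp hpg
    have hXC : (X - C r) ≠ 0 := X_sub_C_ne_zero r
    have hroots : p.roots = r ::ₘ g.roots := by
      rw [hpg, roots_mul (hpg ▸ hp), roots_X_sub_C]
      rfl
    have hcard' : (g.roots.filter (fun x => 0 < x)).card = m := by
      rw [hroots, Multiset.filter_cons, if_pos hrpos] at hcard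
      simp only [Multiset.card_add, Multiset.card_singleton] at hcard
      omega
    have h1 : m ≤ v (coeffL g) := ih g hg hcard'
    have h2 : v (coeffL g) + 1 ≤ v (coeffL p) := by
      rw [hpg, coeffL_mul r g hg]
      exact v_U r hrpos (coeffL g) (exists_ne_zero_coeffL g hg)
    omega


end Descartes

/-- Descartes' rule of signs (upper bound form): the number of strictly positive real roots
of a nonzero real polynomial, counted with multiplicity, is at most the number of sign
changes in its coefficient sequence. -/
theorem descartes_rule_of_signs (p : Polynomial ℝ) (hp : p ≠ 0) :
    (p.roots.filter (fun x => 0 < x)).card ≤ signChanges p := by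
  rw [Descartes.signChanges_eq_v]
  exact Descartes.descartes_aux _ p hp rfl
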